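/- Let K be a compact Hausdorff topological space and let A ⊆ C(K,ℝ) be a dense ℝ-linear subspace that contains the constant functions and is stable under pointwise maximum. The evaluation map sending x ∈ K to the functional δ_x : A → ℝ, δ_x(f) = f(x), is a homeomorphism from K onto the set of ℝ-linear functionals φ : A → ℝ satisfying φ(max(f,g)) = max(φ(f), φ(g)) for all f, g ∈ A and φ(1) = 1, where this set of functionals is equipped with the topology of pointwise convergence on A. -/
import Mathlib


/-- Tropical Gelfand transform: for `K` compact Hausdorff and `A ⊆ C(K,ℝ)` a dense
linear subspace containing the constants and stable under pointwise maximum, the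
evaluation map `x ↦ δ_x` is a homeomorphism from `K` onto the space of normalized
tropical characters of `A`, i.e. the ℝ-linear functionals `φ : A → ℝ` commuting
with `max` and with `φ 1 = 1`, equipped with the topology of pointwise
convergence. -/
theorem evaluation_homeomorphism_tropical_characters
    (K : Type*) [TopologicalSpace K] [CompactSpace K] [T2Space K]
    (A : Submodule ℝ C(K, ℝ))
    (hdense : Dense (A : Set C(K, ℝ)))
    (hconst : ∀ c : ℝ, (ContinuousMap.const K c) ∈ A)
    (hsup : ∀ f g : C(K, ℝ), f ∈ A → g ∈ A → f ⊔ g ∈ A) :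
    ∃ h : K ≃ₜ {φ : A → ℝ //
        (∀ f g : A, φ (f + g) = φ f + φ g) ∧
        (∀ (c : ℝ) (f : A), φ (c • f) = c * φ f) ∧
        (∀ (f g : C(K, ℝ)) (hf : f ∈ A) (hg : g ∈ A),
          φ ⟨f ⊔ g, hsup f g hf hg⟩ = max (φ ⟨f, hf⟩) (φ ⟨g, hg⟩)) ∧
        φ ⟨ContinuousMap.const K 1, hconst 1⟩ = 1},
      ∀ (x : K) (f : C(K, ℝ)) (hf : f ∈ A), (h x).1 ⟨f, hf⟩ = f x := by
  classical
  let S := {φ : A → ℝ //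
        (∀ f g : A, φ (f + g) = φ f + φ g) ∧
        (∀ (c : ℝ) (f : A), φ (c • f) = c * φ f) ∧
        (∀ (f g : C(K, ℝ)) (hf : f ∈ A) (hg : g ∈ A),
          φ ⟨f ⊔ g, hsup f g hf hg⟩ = max (φ ⟨f, hf⟩) (φ ⟨g, hg⟩)) ∧
        φ ⟨ContinuousMap.const K 1, hconst 1⟩ = 1}
  let e : K → S := fun x => ⟨fun f => (f : C(K, ℝ)) x, by
    refine ⟨?_, ?_, ?_, ?_⟩ <;> intros <;> simp⟩
  have heinj : Function.Injective e := by
    intro x y hxy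
    by_contra hne
    obtain ⟨f, hf0, hf1, -⟩ := exists_continuous_zero_one_of_isClosed
      (isClosed_singleton (x := x)) (isClosed_singleton (x := y))
      (by simpa using hne)
    have hA : ∀ g : C(K,ℝ), g ∈ A → g x = g y := fun g hg =>
      congrFun (congrArg Subtype.val hxy) ⟨g, hg⟩
    have hcl : IsClosed {g : C(K,ℝ) | g x = g y} :=
      isClosed_eq (continuous_eval_const x) (continuous_eval_const y)
    have h1 : (closure (A : Set C(K,ℝ))) ⊆ {g : C(K,ℝ) | g x = g y} :=
      closure_minimal (fun g hg => hA g hg) hcl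
    have hfx : f x = f y := h1 (by rw [hdense.closure_eq]; trivial)
    have h0 : f x = 0 := hf0 rfl
    have h1' : f y = 1 := hf1 rfl
    rw [h0, h1'] at hfx
    exact zero_ne_one hfx
  have hesurj : Function.Surjective e := by
    rintro ⟨φ, h1, h2, h3, h4⟩
    have hzero : φ 0 = 0 := by
      have := h1 0 0; simp at this; linarith
    let φL : A →ₗ[ℝ] ℝ := { toFun := φ, map_add' := h1, map_smul' := fun c f => h2 c f }
    have hconstφ : ∀ c : ℝ, φ (⟨ContinuousMap.const K c, hconst c⟩ : A) = c := by
      intro c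
      have h5 : (⟨ContinuousMap.const K c, hconst c⟩ : A)
          = c • (⟨ContinuousMap.const K 1, hconst 1⟩ : A) := by
        apply Subtype.ext; ext z; simp
      rw [h5, h2, h4, mul_one]
    have hmono : ∀ a b : A, (a : C(K,ℝ)) ≤ (b : C(K,ℝ)) → φ a ≤ φ b := by
      intro a b hab
      have h5 : (⟨(a : C(K,ℝ)) ⊔ (b : C(K,ℝ)), hsup _ _ a.2 b.2⟩ : A) = b := by
        apply Subtype.ext; simpa using sup_eq_right.mpr hab
      have h6 := h3 _ _ a.2 b.2
      rw [h5] at h6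
      rw [h6]; exact le_sup_left
    have hK : Nonempty K := by
      by_contra hK
      have h5 : (⟨ContinuousMap.const K 1, hconst 1⟩ : A) = 0 := by
        apply Subtype.ext; ext z; exact absurd ⟨z⟩ hK
      rw [h5, hzero] at h4
      exact zero_ne_one h4
    have hzeroat : ∀ g : A, (0:C(K,ℝ)) ≤ (g : C(K,ℝ)) → φ g = 0 →
        ∃ x : K, (g : C(K,ℝ)) x = 0 := by
      intro g hg hφg
      obtain ⟨x, -, hx⟩ := isCompact_univ.exists_isMinOn Set.univ_nonempty
        (g : C(K,ℝ)).continuous.continuousOn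
      refine ⟨x, le_antisymm ?_ (by simpa using ContinuousMap.le_def.mp hg x)⟩
      by_contra hpos
      push_neg at hpos
      have hle : (ContinuousMap.const K ((g:C(K,ℝ)) x) : C(K,ℝ)) ≤ (g : C(K,ℝ)) :=
        ContinuousMap.le_def.mpr fun y => by simpa using hx (Set.mem_univ y)
      have h5 := hmono ⟨_, hconst _⟩ g hle
      rw [hconstφ, hφg] at h5
      linarith
    have dmem : ∀ f : A, ((f : C(K,ℝ)) - ContinuousMap.const K (φ f))
        ⊔ (-((f : C(K,ℝ)) - ContinuousMap.const K (φ f))) ∈ A := fun f =>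
      hsup _ _ (A.sub_mem f.2 (hconst _)) (A.neg_mem (A.sub_mem f.2 (hconst _)))
    let d : A → A := fun f => ⟨_, dmem f⟩
    have hd0 : ∀ f : A, φ (d f) = 0 := by
      intro f
      have hu : ((f : C(K,ℝ)) - ContinuousMap.const K (φ f)) ∈ A := A.sub_mem f.2 (hconst _)
      have key : φ (d f) = max (φ ⟨_, hu⟩) (φ ⟨_, A.neg_mem hu⟩) := h3 _ _ hu (A.neg_mem hu)
      have hval : φ (f - (⟨ContinuousMap.const K (φ f), hconst (φ f)⟩ : A))
          = φ f - φ (⟨ContinuousMap.const K (φ f), hconst (φ f)⟩ : A) := map_sub φL _ _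
      rw [hconstφ, sub_self] at hval
      have hvneg : φ (-(f - (⟨ContinuousMap.const K (φ f), hconst (φ f)⟩ : A)))
          = -φ (f - (⟨ContinuousMap.const K (φ f), hconst (φ f)⟩ : A)) := map_neg φL _
      have e1 : (⟨_, hu⟩ : A) = f - (⟨ContinuousMap.const K (φ f), hconst (φ f)⟩ : A) := rfl
      have e2 : (⟨_, A.neg_mem hu⟩ : A)
          = -(f - (⟨ContinuousMap.const K (φ f), hconst (φ f)⟩ : A)) := rfl
      rw [key, e1, e2, hvneg, hval]
      simp
    have hdnn : ∀ (f : A) (x : K), 0 ≤ (d f : C(K,ℝ)) x := by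
      intro f x
      show 0 ≤ ((((f : C(K,ℝ)) - ContinuousMap.const K (φ f))
        ⊔ (-((f : C(K,ℝ)) - ContinuousMap.const K (φ f)))) x)
      rw [ContinuousMap.sup_apply, ContinuousMap.neg_apply]
      rw [← abs_eq_max_neg]
      exact abs_nonneg _
    have hfin : ∀ t : Finset A, ∃ x : K, ∀ f ∈ t, (f : C(K,ℝ)) x = φ f := by
      intro t
      set G : A := ∑ f ∈ t, d f with hG
      have hGφ : φ G = 0 := by
        calc φ G = φL G := rfl
          _ = ∑ f ∈ t, φL (d f) := map_sum φL d t
          _ = 0 := Finset.sum_eq_zero (fun f _ => hd0 f)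
      have hGx : ∀ x, (G : C(K,ℝ)) x = ∑ f ∈ t, ((d f : C(K,ℝ)) x) := by
        intro x
        rw [hG]
        rw [AddSubmonoidClass.coe_finset_sum]
        simp
      have hGnn : (0:C(K,ℝ)) ≤ (G : C(K,ℝ)) := ContinuousMap.le_def.mpr fun x => by
        rw [hGx]
        simpa using Finset.sum_nonneg fun f _ => hdnn f x
      obtain ⟨x, hx⟩ := hzeroat G hGnn hGφ
      refine ⟨x, fun f hf => ?_⟩
      have hterm : (d f : C(K,ℝ)) x = 0 := by
        have hsum0 : ∑ g ∈ t, ((d g : C(K,ℝ)) x) = 0 := by rw [← hGx]; exact hx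
        exact (Finset.sum_eq_zero_iff_of_nonneg (fun g _ => hdnn g x)).mp hsum0 f hf
      have hmax : max ((f:C(K,ℝ)) x - φ f) (-((f:C(K,ℝ)) x - φ f)) = 0 := by
        have : ((((f : C(K,ℝ)) - ContinuousMap.const K (φ f))
          ⊔ (-((f : C(K,ℝ)) - ContinuousMap.const K (φ f)))) x) = 0 := hterm
        simpa [ContinuousMap.sup_apply] using this
      have habs : |(f:C(K,ℝ)) x - φ f| = 0 := by rw [abs_eq_max_neg]; exact hmax
      have := abs_eq_zero.mp habs
      linarith
    have hZ : ∀ f : A, IsClosed {x : K | (f : C(K,ℝ)) x = φ f} := fun f =>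
      isClosed_eq (f : C(K,ℝ)).continuous continuous_const
    have hne : (⋂ f : A, {x : K | (f : C(K,ℝ)) x = φ f}).Nonempty := by
      by_contra hempty
      rw [Set.not_nonempty_iff_eq_empty] at hempty
      obtain ⟨t, ht⟩ := isCompact_univ.elim_finite_subfamily_closed _ hZ (by simp [hempty])
      obtain ⟨x, hx⟩ := hfin t
      have hxmem : x ∈ (Set.univ : Set K) ∩ ⋂ f ∈ t, {x : K | (f:C(K,ℝ)) x = φ f} :=
        ⟨trivial, Set.mem_iInter₂.mpr fun f hf => hx f hf⟩
      rw [ht] at hxmem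
      exact hxmem
    obtain ⟨x, hx⟩ := hne
    refine ⟨x, ?_⟩
    apply Subtype.ext
    funext f
    exact Set.mem_iInter.mp hx f
  have hcont : Continuous e := by
    apply Continuous.subtype_mk
    exact continuous_pi fun f => (f : C(K,ℝ)).continuous
  let E := Equiv.ofBijective e ⟨heinj, hesurj⟩
  exact ⟨Continuous.homeoOfEquivCompactToT2 (f := E) hcont, fun x f hf => rfl⟩
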